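/- Feasibility of the residual: Let b = A x̄ with x̄ supported on S, |S| = s, and let h(x) := ‖Ax - b‖_2^2 + λ(‖x‖_1 - ‖x‖_2) with λ > 0. If x* satisfies h(x*) ≤ h(x̄), then ‖(x* - x̄)_{S^c}‖_1 ≤ ‖(x* - x̄)_S‖_1 + ‖x* - x̄‖_2. -/
import Mathlib


open Finset

noncomputable def l1 {k : ℕ} (x : Fin k → ℝ) : ℝ := ∑ i, |x i|

noncomputable def l2 {k : ℕ} (x : Fin k → ℝ) : ℝ := Real.sqrt (∑ i, (x i)^2)

def restr {k : ℕ} (I : Finset (Fin k)) (x : Fin k → ℝ) : Fin k → ℝ :=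
  fun i => if i ∈ I then x i else 0

lemma l2_eq_norm {k : ℕ} (x : Fin k → ℝ) :
    l2 x = ‖(WithLp.equiv 2 (Fin k → ℝ)).symm x‖ := by
  rw [EuclideanSpace.norm_eq]
  simp [l2, sq_abs]

lemma l2_triangle {k : ℕ} (x y : Fin k → ℝ) : l2 (x + y) ≤ l2 x + l2 y := by
  simp only [l2_eq_norm]
  rw [show (WithLp.equiv 2 (Fin k → ℝ)).symm (x + y)
      = (WithLp.equiv 2 (Fin k → ℝ)).symm x + (WithLp.equiv 2 (Fin k → ℝ)).symm y from rfl]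
  exact norm_add_le _ _

lemma l2_nonneg {k : ℕ} (x : Fin k → ℝ) : 0 ≤ l2 x := Real.sqrt_nonneg _

theorem stmt11 {m n : ℕ} (A : Matrix (Fin m) (Fin n) ℝ) (xbar xstar : Fin n → ℝ)
    (b : Fin m → ℝ) (S : Finset (Fin n)) (s : ℕ) (lam : ℝ) (hlam : 0 < lam)
    (hb : b = A.mulVec xbar) (hsupp : ∀ i, xbar i ≠ 0 ↔ i ∈ S) (hcardS : S.card = s)
    (hlev : (l2 (A.mulVec xstar - b))^2 + lam * (l1 xstar - l2 xstar) ≤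
            (l2 (A.mulVec xbar - b))^2 + lam * (l1 xbar - l2 xbar)) :
    l1 (restr Sᶜ (xstar - xbar)) ≤ l1 (restr S (xstar - xbar)) + l2 (xstar - xbar) := by
  set h := xstar - xbar with hh
  -- zero residual at xbar
  have hbz : A.mulVec xbar - b = 0 := by rw [hb]; simp
  have hz : l2 (A.mulVec xbar - b) = 0 := by
    rw [hbz]; simp [l2]
  -- key scalar inequality
  have key : l1 xstar - l2 xstar ≤ l1 xbar - l2 xbar := by
    have h0 : (0:ℝ) ≤ (l2 (A.mulVec xstar - b))^2 := sq_nonneg _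
    have := hlev
    rw [hz] at this
    nlinarith
  -- xbar is zero off S
  have hbar0 : ∀ i ∈ Sᶜ, xbar i = 0 := by
    intro i hi
    by_contra hne
    exact (mem_compl.mp hi) ((hsupp i).mp hne)
  -- l1 splits
  have split : ∀ (y : Fin n → ℝ), l1 y = ∑ i ∈ S, |y i| + ∑ i ∈ Sᶜ, |y i| := by
    intro y
    rw [l1, ← Finset.sum_add_sum_compl S]
  have hrS : l1 (restr S h) = ∑ i ∈ S, |h i| := by
    rw [split]
    have : ∑ i ∈ Sᶜ, |restr S h i| = 0 := by
      apply Finset.sum_eq_zero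
      intro i hi
      simp [restr, (mem_compl.mp hi)]
    rw [this, add_zero]
    apply Finset.sum_congr rfl
    intro i hi; simp [restr, hi]
  have hrSc : l1 (restr Sᶜ h) = ∑ i ∈ Sᶜ, |h i| := by
    rw [split]
    have h1 : ∑ i ∈ S, |restr Sᶜ h i| = 0 := by
      apply Finset.sum_eq_zero
      intro i hi
      simp [restr, mem_compl, hi]
    rw [h1, zero_add]
    apply Finset.sum_congr rfl
    intro i hi
    have : restr Sᶜ h i = h i := by simp [restr, hi]
    rw [this]
  -- l1 xbar only on S
  have hl1bar : l1 xbar = ∑ i ∈ S, |xbar i| := by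
    rw [split]
    have : ∑ i ∈ Sᶜ, |xbar i| = 0 := by
      apply Finset.sum_eq_zero
      intro i hi; rw [hbar0 i hi, abs_zero]
    rw [this, add_zero]
  -- lower bound on l1 xstar
  have hl1star : l1 xbar - l1 (restr S h) + l1 (restr Sᶜ h) ≤ l1 xstar := by
    rw [hl1bar, hrS, hrSc, split xstar]
    have hA : ∑ i ∈ S, |xbar i| - ∑ i ∈ S, |h i| ≤ ∑ i ∈ S, |xstar i| := by
      rw [← Finset.sum_sub_distrib]
      apply Finset.sum_le_sum
      intro i _
      have hx : xstar i = xbar i + h i := by simp [hh]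
      rw [hx]
      have h2 := abs_sub_abs_le_abs_sub (xbar i) (xbar i + h i)
      have h3 : xbar i - (xbar i + h i) = -(h i) := by ring
      rw [h3, abs_neg] at h2
      linarith
    have hB : ∑ i ∈ Sᶜ, |h i| = ∑ i ∈ Sᶜ, |xstar i| := by
      apply Finset.sum_congr rfl
      intro i hi
      have : h i = xstar i := by simp [hh, hbar0 i hi]
      rw [this]
    linarith
  -- l2 triangle: l2 xstar ≤ l2 xbar + l2 h
  have hl2 : l2 xstar ≤ l2 xbar + l2 h := by
    have : xstar = xbar + h := by simp [hh]
    rw [this]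
    exact l2_triangle _ _
  linarith
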